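/- arXiv:1810.06915 — 3 statements merged into one kernel-verified Lean document; each statement's English description precedes it below -/
import Mathlib

section
/- Fix β > 0, 0 < γ < 1/(2√(2β)), and t ∈ [0,1]. Consider the quadratic polynomial P(X) = X² + (4(1−βγ²)t² − 4t + 1)X + 4t⁴γ⁴β². Its discriminant equals Δ = 4(1−c²)(2t−1)²(t−t⁺)(t−t⁻), where c = γ√(2β), t⁻ = 1/(2(1+c)), t⁺ = 1/(2(1−c)). Hence Δ < 0 for t⁻ < t < t⁺ with t ≠ 1/2, and Δ > 0 for 0 < t < t⁻ and for t⁺ < t ≤ 1. -/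
/-- The discriminant of the reduced characteristic polynomial
`P(X) = X² + (4(1−βγ²)t² − 4t + 1)X + 4t⁴γ⁴β²` at the transition point `C`
equals `4(1−c²)(2t−1)²(t−t⁺)(t−t⁻)`; it is negative for `t⁻ < t < t⁺`
(`t ≠ 1/2`) and positive for `0 < t < t⁻` and for `t⁺ < t ≤ 1`. -/
theorem discriminant_point_C (β γ t : ℝ) (hβ : 0 < β) (hγ : 0 < γ)
    (hγ' : γ < 1 / (2 * Real.sqrt (2 * β))) (ht : t ∈ Set.Icc (0 : ℝ) 1) :
    let c := γ * Real.sqrt (2 * β)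
    let tm := 1 / (2 * (1 + c))
    let tp := 1 / (2 * (1 - c))
    let b := 4 * (1 - β * γ ^ 2) * t ^ 2 - 4 * t + 1
    let c₀ := 4 * t ^ 4 * γ ^ 4 * β ^ 2
    let Δ := b ^ 2 - 4 * c₀
    Δ = 4 * (1 - c ^ 2) * (2 * t - 1) ^ 2 * (t - tp) * (t - tm) ∧
    ((tm < t ∧ t < tp ∧ t ≠ 1 / 2) → Δ < 0) ∧
    (((0 < t ∧ t < tm) ∨ (tp < t ∧ t ≤ 1)) → 0 < Δ) := by
  intro c tm tp b c₀ Δ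
  have hs : Real.sqrt (2 * β) ^ 2 = 2 * β := Real.sq_sqrt (by positivity)
  have hspos : 0 < Real.sqrt (2 * β) := Real.sqrt_pos.mpr (by positivity)
  have hcpos : 0 < c := by positivity
  have hsne : Real.sqrt (2 * β) ≠ 0 := hspos.ne'
  have hchalf : c < 1 / 2 := by
    calc c = γ * Real.sqrt (2 * β) := rfl
      _ < (1 / (2 * Real.sqrt (2 * β))) * Real.sqrt (2 * β) :=
        mul_lt_mul_of_pos_right hγ' hspos
      _ = 1 / 2 := by field_simp
  have hc2 : c ^ 2 = 2 * β * γ ^ 2 := by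
    show (γ * Real.sqrt (2 * β)) ^ 2 = 2 * β * γ ^ 2
    rw [mul_pow, hs]; ring
  have h1c : (0:ℝ) < 1 - c := by linarith
  have h1c' : (0:ℝ) < 1 + c := by linarith
  have h1c2 : (0:ℝ) < 1 - c ^ 2 := by nlinarith
  have hid : Δ = 4 * (1 - c ^ 2) * (2 * t - 1) ^ 2 * (t - tp) * (t - tm) := by
    show b ^ 2 - 4 * c₀ = _
    have hb : b = 4 * t ^ 2 - 2 * c ^ 2 * t ^ 2 - 4 * t + 1 := by
      show 4 * (1 - β * γ ^ 2) * t ^ 2 - 4 * t + 1 = _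
      linear_combination (2 * t ^ 2) * hc2
    have hc0 : c₀ = t ^ 4 * c ^ 4 := by
      show 4 * t ^ 4 * γ ^ 4 * β ^ 2 = _
      linear_combination (-(t^4) * (c^2 + 2 * β * γ^2)) * hc2
    rw [hb, hc0]
    show _ = 4 * (1 - c ^ 2) * (2 * t - 1) ^ 2 * (t - 1 / (2 * (1 - c))) *
      (t - 1 / (2 * (1 + c)))
    field_simp
    ring
  refine ⟨hid, ?_, ?_⟩
  · rintro ⟨h1, h2, h3⟩
    rw [hid]
    have hsq : 0 < (2 * t - 1) ^ 2 := by
      have : 2 * t - 1 ≠ 0 := fun h => h3 (by linarith)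
      positivity
    have h4 : t - tp < 0 := by linarith
    have h5 : 0 < t - tm := by linarith
    have hA : 0 < (1 - c ^ 2) * (2 * t - 1) ^ 2 := mul_pos h1c2 hsq
    have hB : (t - tp) * (t - tm) < 0 := mul_neg_of_neg_of_pos h4 h5
    have hE : 4 * (1 - c ^ 2) * (2 * t - 1) ^ 2 * (t - tp) * (t - tm)
        = 4 * ((1 - c ^ 2) * (2 * t - 1) ^ 2 * ((t - tp) * (t - tm))) := by ring
    rw [hE]
    have := mul_neg_of_pos_of_neg hA hB
    linarith
  · rintro (⟨h1, h2⟩ | ⟨h1, h2⟩) <;> rw [hid]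
    · have htm : tm < 1 / 2 := by
        show 1 / (2 * (1 + c)) < 1 / 2
        rw [div_lt_div_iff₀ (by linarith) (by norm_num)]
        linarith
      have hsq : 0 < (2 * t - 1) ^ 2 := by
        have : 2 * t - 1 ≠ 0 := by intro h; nlinarith
        positivity
      have htp : t - tp < 0 := by
        have : tm < tp := by
          show 1 / (2 * (1 + c)) < 1 / (2 * (1 - c))
          rw [div_lt_div_iff₀ (by linarith) (by linarith)]
          linarith
        linarith
      have hA : 0 < (1 - c ^ 2) * (2 * t - 1) ^ 2 := mul_pos h1c2 hsq
      have hB : 0 < (t - tp) * (t - tm) :=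
        mul_pos_of_neg_of_neg (by linarith) (by linarith)
      have hE : 4 * (1 - c ^ 2) * (2 * t - 1) ^ 2 * (t - tp) * (t - tm)
          = 4 * ((1 - c ^ 2) * (2 * t - 1) ^ 2 * ((t - tp) * (t - tm))) := by ring
      rw [hE]
      have := mul_pos hA hB
      linarith
    · have htp : (1:ℝ) / 2 < tp := by
        show 1 / 2 < 1 / (2 * (1 - c))
        rw [div_lt_div_iff₀ (by norm_num) (by linarith)]
        linarith
      have htm : tm < tp := by
        show 1 / (2 * (1 + c)) < 1 / (2 * (1 - c))
        rw [div_lt_div_iff₀ (by linarith) (by linarith)]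
        linarith
      have hsq : 0 < (2 * t - 1) ^ 2 := by
        have : 2 * t - 1 ≠ 0 := by intro h; nlinarith
        positivity
      have hA : 0 < (1 - c ^ 2) * (2 * t - 1) ^ 2 := mul_pos h1c2 hsq
      have hB : 0 < (t - tp) * (t - tm) :=
        mul_pos (by linarith) (by linarith)
      have hE : 4 * (1 - c ^ 2) * (2 * t - 1) ^ 2 * (t - tp) * (t - tm)
          = 4 * ((1 - c ^ 2) * (2 * t - 1) ^ 2 * ((t - tp) * (t - tm))) := by ring
      rw [hE]
      have := mul_pos hA hB
      linarith
end

section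
/- Fix α, β > 0 and j ∈ ℝ, and let g(ρ) = (2β−ρ²)(2(α+β−j)−ρ²). Define f(ρ) = 2ρ²g(ρ)g''(ρ) + 2ρg(ρ)g'(ρ) − ρ²g'(ρ)² − 4g(ρ)². Then f(ρ) = 4P(j) where P, viewed as a quadratic polynomial in j, equals P(j) = −16β²j² + 8(ρ⁶ − 3βρ⁴ + 4β²(α+β))j + 3ρ⁸ − 8(α+2β)ρ⁶ + 24β(α+β)ρ⁴ − 16β²(α+β)², and the discriminant of P in j equals −64ρ⁶(2β−ρ²)³. In particular, for 0 < ρ² < 2β, f(ρ) < 0 for every j ∈ ℝ. -/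
lemma deriv_g_aux (β c : ℝ) :
    deriv (fun x : ℝ => (2 * β - x ^ 2) * (c - x ^ 2)) =
      fun x => -2 * x * (c - x ^ 2) + (2 * β - x ^ 2) * (-2 * x) := by
  funext x
  have h1 : HasDerivAt (fun x : ℝ => 2 * β - x ^ 2) (-2 * x) x := by
    simpa using ((hasDerivAt_pow 2 x).const_sub (2 * β))
  have h2 : HasDerivAt (fun x : ℝ => c - x ^ 2) (-2 * x) x := by
    simpa using ((hasDerivAt_pow 2 x).const_sub c)
  have := h1.mul h2
  convert this.deriv using 1
  rfl

lemma deriv2_g_aux (β c : ℝ) :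
    deriv (deriv (fun x : ℝ => (2 * β - x ^ 2) * (c - x ^ 2))) =
      fun x => 12 * x ^ 2 - 2 * c - 4 * β := by
  rw [deriv_g_aux]
  funext x
  have h : (fun x : ℝ => -2 * x * (c - x ^ 2) + (2 * β - x ^ 2) * (-2 * x)) =
      fun x : ℝ => 4 * x ^ 3 - (2 * c + 4 * β) * x := by
    funext x; ring
  rw [h]
  have h1 : HasDerivAt (fun x : ℝ => 4 * x ^ 3 - (2 * c + 4 * β) * x)
      (12 * x ^ 2 - 2 * c - 4 * β) x := by
    have := ((hasDerivAt_pow 3 x).const_mul 4).sub ((hasDerivAt_id x).const_mul (2 * c + 4 * β))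
    refine this.congr_deriv ?_
    ring
  exact h1.deriv

/-- Key negativity claim of Lemma 6.8: with
`g(ρ) = (2β−ρ²)(2(α+β−j)−ρ²)` and
`f(ρ) = 2ρ²g g'' + 2ρ g g' − ρ²(g')² − 4g²`, one has `f(ρ) = 4P(j)` where `P`
is an explicit quadratic in `j` with discriminant `−64ρ⁶(2β−ρ²)³`; hence for
`0 < ρ² < 2β`, `f(ρ) < 0` for every `j`. -/
theorem rank_one_negativity (α β j ρ : ℝ) (hα : 0 < α) (hβ : 0 < β) :
    let g : ℝ → ℝ := fun x => (2 * β - x ^ 2) * (2 * (α + β - j) - x ^ 2)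
    let f := 2 * ρ ^ 2 * g ρ * deriv (deriv g) ρ +
      2 * ρ * g ρ * deriv g ρ - ρ ^ 2 * (deriv g ρ) ^ 2 - 4 * (g ρ) ^ 2
    let P : ℝ → ℝ := fun y => -16 * β ^ 2 * y ^ 2 +
      8 * (ρ ^ 6 - 3 * β * ρ ^ 4 + 4 * β ^ 2 * (α + β)) * y +
      3 * ρ ^ 8 - 8 * (α + 2 * β) * ρ ^ 6 + 24 * β * (α + β) * ρ ^ 4 -
      16 * β ^ 2 * (α + β) ^ 2
    f = 4 * P j ∧
    (8 * (ρ ^ 6 - 3 * β * ρ ^ 4 + 4 * β ^ 2 * (α + β))) ^ 2 -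
      4 * (-16 * β ^ 2) *
        (3 * ρ ^ 8 - 8 * (α + 2 * β) * ρ ^ 6 + 24 * β * (α + β) * ρ ^ 4 -
          16 * β ^ 2 * (α + β) ^ 2) =
      -64 * ρ ^ 6 * (2 * β - ρ ^ 2) ^ 3 ∧
    (0 < ρ ^ 2 ∧ ρ ^ 2 < 2 * β → f < 0) := by
  intro g f P
  have hd1 : deriv g ρ = -2 * ρ * (2 * (α + β - j) - ρ ^ 2) + (2 * β - ρ ^ 2) * (-2 * ρ) := by
    show deriv (fun x : ℝ => (2 * β - x ^ 2) * (2 * (α + β - j) - x ^ 2)) ρ = _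
    rw [deriv_g_aux]
  have hd2 : deriv (deriv g) ρ = 12 * ρ ^ 2 - 2 * (2 * (α + β - j)) - 4 * β := by
    show deriv (deriv (fun x : ℝ => (2 * β - x ^ 2) * (2 * (α + β - j) - x ^ 2))) ρ = _
    rw [deriv2_g_aux]
  have hf : f = 4 * P j := by
    show 2 * ρ ^ 2 * g ρ * deriv (deriv g) ρ +
      2 * ρ * g ρ * deriv g ρ - ρ ^ 2 * (deriv g ρ) ^ 2 - 4 * (g ρ) ^ 2 = 4 * P j
    rw [hd1, hd2]
    simp only [g, P]
    ring
  refine ⟨hf, by ring, ?_⟩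
  rintro ⟨h1, h2⟩
  rw [hf]
  have hdisc : (8 * (ρ ^ 6 - 3 * β * ρ ^ 4 + 4 * β ^ 2 * (α + β))) ^ 2 -
      4 * (-16 * β ^ 2) *
        (3 * ρ ^ 8 - 8 * (α + 2 * β) * ρ ^ 6 + 24 * β * (α + β) * ρ ^ 4 -
          16 * β ^ 2 * (α + β) ^ 2) < 0 := by
    have : 0 < ρ ^ 6 := by
      have := pow_pos h1 3
      calc (0:ℝ) < (ρ ^ 2) ^ 3 := this
        _ = ρ ^ 6 := by ring
    have h3 : 0 < (2 * β - ρ ^ 2) ^ 3 := by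
      exact pow_pos (by linarith) 3
    nlinarith
  have hP : P j < 0 := by
    show -16 * β ^ 2 * j ^ 2 +
      8 * (ρ ^ 6 - 3 * β * ρ ^ 4 + 4 * β ^ 2 * (α + β)) * j +
      3 * ρ ^ 8 - 8 * (α + 2 * β) * ρ ^ 6 + 24 * β * (α + β) * ρ ^ 4 -
      16 * β ^ 2 * (α + β) ^ 2 < 0
    nlinarith [sq_nonneg (2 * (-16 * β ^ 2) * j + 8 * (ρ ^ 6 - 3 * β * ρ ^ 4 + 4 * β ^ 2 * (α + β))), sq_nonneg β, hβ]
  linarith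
end

section
/- The 4×4 real matrix M(a) = [[0,0,0,a],[0,0,a,0],[0,a,0,b],[a,0,−b,0]] (for real a,b) has characteristic polynomial χ(X) = X⁴ + (b² − 2a²)X² + a⁴; in particular its eigenvalues λ satisfy λ² are roots of Y² + (b² − 2a²)Y + a⁴, whose discriminant is b²(b² − 4a²). Hence if 0 < b < 2|a| then all four eigenvalues have nonzero real and nonzero imaginary part. -/
/-- The matrix `M(a,b) = [[0,0,0,a],[0,0,a,0],[0,a,0,b],[a,0,−b,0]]` has
characteristic polynomial `X⁴ + (b² − 2a²)X² + a⁴`; the discriminant of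
`Y² + (b²−2a²)Y + a⁴` is `b²(b²−4a²)`; and if `0 < b < 2|a|` then every
eigenvalue of `M` has nonzero real and nonzero imaginary part. -/
theorem charpoly_focus_focus_matrix (a b : ℝ) :
    let M : Matrix (Fin 4) (Fin 4) ℝ :=
      !![0, 0, 0, a; 0, 0, a, 0; 0, a, 0, b; a, 0, -b, 0]
    M.charpoly = Polynomial.X ^ 4 +
      Polynomial.C (b ^ 2 - 2 * a ^ 2) * Polynomial.X ^ 2 +
      Polynomial.C (a ^ 4) ∧
    (b ^ 2 - 2 * a ^ 2) ^ 2 - 4 * a ^ 4 = b ^ 2 * (b ^ 2 - 4 * a ^ 2) ∧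
    (0 < b ∧ b < 2 * |a| →
      ∀ z : ℂ, Matrix.det (z • (1 : Matrix (Fin 4) (Fin 4) ℂ) -
        M.map Complex.ofReal) = 0 → z.re ≠ 0 ∧ z.im ≠ 0) := by
  intro M
  refine ⟨?_, by ring, ?_⟩
  · have hcm : M.charmatrix =
        !![Polynomial.X, 0, 0, Polynomial.C (-a);
           0, Polynomial.X, Polynomial.C (-a), 0;
           0, Polynomial.C (-a), Polynomial.X, Polynomial.C (-b);
           Polynomial.C (-a), 0, Polynomial.C b, Polynomial.X] := by
      ext i j
      fin_cases i <;> fin_cases j <;>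
        simp [Matrix.charmatrix_apply, Matrix.one_apply, M]
    have hcs : (Fin.castSucc 2 : Fin 4) = 2 := rfl
    have hsa : Fin.succAbove (3 : Fin 4) (2 : Fin 3) = 2 := by decide
    rw [Matrix.charpoly, hcm]
    simp [Matrix.det_succ_row_zero, Fin.sum_univ_succ, hcs, hsa, map_ofNat]
    ring
  · rintro ⟨hb0, hb2⟩ z hz
    have hb4 : b ^ 2 < 4 * a ^ 2 := by
      nlinarith [abs_nonneg a, sq_abs a]
    have hpos : ∀ t : ℝ, 0 < t ^ 2 + (b ^ 2 - 2 * a ^ 2) * t + a ^ 4 := by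
      intro t
      nlinarith [sq_nonneg (2 * t + (b ^ 2 - 2 * a ^ 2)),
        mul_pos (mul_pos hb0 hb0) (sub_pos.mpr hb4)]
    have heq : z ^ 4 + ((b : ℂ) ^ 2 - 2 * (a : ℂ) ^ 2) * z ^ 2 + (a : ℂ) ^ 4 = 0 := by
      have hm : z • (1 : Matrix (Fin 4) (Fin 4) ℂ) - M.map Complex.ofReal =
          !![z, 0, 0, -(a : ℂ); 0, z, -(a : ℂ), 0;
             0, -(a : ℂ), z, -(b : ℂ); -(a : ℂ), 0, (b : ℂ), z] := by
        ext i j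
        fin_cases i <;> fin_cases j <;> simp [Matrix.one_apply, M]
      have hcs : (Fin.castSucc 2 : Fin 4) = 2 := rfl
      have hsa : Fin.succAbove (3 : Fin 4) (2 : Fin 3) = 2 := by decide
      rw [hm, Matrix.det_succ_row_zero] at hz
      simp [Fin.sum_univ_succ, Matrix.det_fin_three, hcs, hsa] at hz
      linear_combination hz
    constructor
    · intro hre
      have hw : z ^ 2 = ((-(z.im ^ 2) : ℝ) : ℂ) := by
        apply Complex.ext <;> simp [pow_two, Complex.mul_re, Complex.mul_im, hre]
      have h4 : z ^ 4 = (z ^ 2) ^ 2 := by ring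
      rw [h4, hw] at heq
      have : ((((-(z.im ^ 2)) ^ 2 + (b ^ 2 - 2 * a ^ 2) * (-(z.im ^ 2)) + a ^ 4 : ℝ)) : ℂ) = 0 := by
        push_cast
        push_cast at heq
        linear_combination heq
      have hr := Complex.ofReal_eq_zero.mp this
      exact absurd hr (ne_of_gt (hpos _))
    · intro him
      have hzr : z = ((z.re : ℝ) : ℂ) := by
        apply Complex.ext <;> simp [him]
      rw [hzr] at heq
      have : (((z.re ^ 2) ^ 2 + (b ^ 2 - 2 * a ^ 2) * z.re ^ 2 + a ^ 4 : ℝ) : ℂ) = 0 := by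
        push_cast
        linear_combination heq
      have hr := Complex.ofReal_eq_zero.mp this
      exact absurd hr (ne_of_gt (hpos _))
end
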